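/- Let κ₁, κ₂, λ > 0 and ξ ∈ ℝ. Set α₁ = √(λ/κ₁), α₂ = √(λ/κ₂), assume sin(α₁ξ) ≠ 0 and sin(α₂(1−ξ)) ≠ 0, let r = sin(α₁ξ)/sin(α₂(1−ξ)), and define w₁(x) = sin(α₁ x) and w₂(x) = r · sin(α₂(1−x)). Then the flux continuity condition κ₁ · w₁'(ξ) = κ₂ · w₂'(ξ) holds if and only if √κ₁ · (cos(α₁ξ)/sin(α₁ξ)) + √κ₂ · (cos(α₂(1−ξ))/sin(α₂(1−ξ))) = 0. -/

import Mathlib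

/-- Eigenvalue condition (eq:eig) of Appendix B: with `α_i = √(λ/κ_i)`,
`r = sin(α₁ξ)/sin(α₂(1−ξ))`, `w₁(x) = sin(α₁x)` and `w₂(x) = r sin(α₂(1−x))`,
flux continuity `κ₁ w₁'(ξ) = κ₂ w₂'(ξ)` at the interface holds if and only if
`√κ₁ cot(α₁ξ) + √κ₂ cot(α₂(1−ξ)) = 0`. -/
theorem stmt_19 (κ₁ κ₂ lam ξ : ℝ) (hκ₁ : 0 < κ₁) (hκ₂ : 0 < κ₂) (hlam : 0 < lam)
    (α₁ α₂ : ℝ) (hα₁ : α₁ = Real.sqrt (lam / κ₁)) (hα₂ : α₂ = Real.sqrt (lam / κ₂))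
    (hsin₁ : Real.sin (α₁ * ξ) ≠ 0) (hsin₂ : Real.sin (α₂ * (1 - ξ)) ≠ 0)
    (r : ℝ) (hr : r = Real.sin (α₁ * ξ) / Real.sin (α₂ * (1 - ξ)))
    (w₁ w₂ : ℝ → ℝ)
    (hw₁ : w₁ = fun x => Real.sin (α₁ * x))
    (hw₂ : w₂ = fun x => r * Real.sin (α₂ * (1 - x))) :
    κ₁ * deriv w₁ ξ = κ₂ * deriv w₂ ξ ↔
      Real.sqrt κ₁ * (Real.cos (α₁ * ξ) / Real.sin (α₁ * ξ))
        + Real.sqrt κ₂ * (Real.cos (α₂ * (1 - ξ)) / Real.sin (α₂ * (1 - ξ))) = 0 := by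
  have hd1 : HasDerivAt w₁ (Real.cos (α₁ * ξ) * α₁) ξ := by
    rw [hw₁]
    simpa [Function.comp_def] using (Real.hasDerivAt_sin (α₁ * ξ)).comp ξ
      ((hasDerivAt_id ξ).const_mul α₁)
  have hinner : HasDerivAt (fun x : ℝ => α₂ * (1 - x)) (-α₂) ξ := by
    simpa using ((hasDerivAt_const ξ (1:ℝ)).sub (hasDerivAt_id ξ)).const_mul α₂
  have hd2 : HasDerivAt w₂ (r * (Real.cos (α₂ * (1 - ξ)) * (-α₂))) ξ := by
    rw [hw₂]
    exact (((Real.hasDerivAt_sin (α₂ * (1 - ξ))).comp ξ hinner)).const_mul r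
  rw [hd1.deriv, hd2.deriv]
  set s1 := Real.sqrt κ₁ with hs1
  set s2 := Real.sqrt κ₂ with hs2
  set sl := Real.sqrt lam with hsl
  have hs1p : 0 < s1 := Real.sqrt_pos.2 hκ₁
  have hs2p : 0 < s2 := Real.sqrt_pos.2 hκ₂
  have hslp : 0 < sl := Real.sqrt_pos.2 hlam
  have hk1 : κ₁ = s1 ^ 2 := by rw [hs1, Real.sq_sqrt hκ₁.le]
  have hk2 : κ₂ = s2 ^ 2 := by rw [hs2, Real.sq_sqrt hκ₂.le]
  have ha1 : α₁ = sl / s1 := by rw [hα₁, Real.sqrt_div hlam.le]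
  have ha2 : α₂ = sl / s2 := by rw [hα₂, Real.sqrt_div hlam.le]
  rw [hr]
  set S1 := Real.sin (α₁ * ξ)
  set S2 := Real.sin (α₂ * (1 - ξ))
  set C1 := Real.cos (α₁ * ξ)
  set C2 := Real.cos (α₂ * (1 - ξ))
  have e1 : κ₁ * (C1 * α₁) = sl * (s1 * C1) := by
    rw [hk1, ha1]; field_simp
  have e2 : κ₂ * (S1 / S2 * (C2 * -α₂)) = sl * (-(s2 * S1 * C2 / S2)) := by
    rw [hk2, ha2]; field_simp
  rw [e1, e2, mul_right_inj' hslp.ne']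
  rw [eq_comm, neg_eq_iff_eq_neg, div_eq_iff hsin₂, ← mul_div_assoc, ← mul_div_assoc,
    div_add_div _ _ hsin₁ hsin₂, div_eq_zero_iff]
  constructor
  · intro h
    left; linear_combination h
  · rintro (h | h)
    · linear_combination h
    · exact absurd h (mul_ne_zero hsin₁ hsin₂)
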